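/- Let M be a finitely generated module over a discrete valuation ring R with residue field k and uniformizer π, and let a be a natural number. Then the length of the π^a-torsion submodule of M is at most a times the dimension of M ⊗_R k as a k-vector space. -/

import Mathlib

open TensorProduct

/-- The length of an `R`-module `M`, defined as the Krull dimension of its lattice of
submodules (an element of `WithBot ℕ∞`). -/
noncomputable def moduleLength (R M : Type*) [Ring R] [AddCommGroup M] [Module R M] :
    WithBot ℕ∞ :=
  Order.krullDim (Submodule R M)

open Submodule Pointwise in
/-- Key induction: a module over a DVR killed by `π ^ a` and generated by `d` elements admits a
strictly monotone `ℕ`-valued function on its submodule lattice bounded by `a * d`. -/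
private lemma exists_rankFun {R : Type u} [CommRing R] [IsDomain R] [IsDiscreteValuationRing R]
    {π : R} (hπ : Irreducible π) :
    ∀ (a : ℕ) (X : Type v) [AddCommGroup X] [Module R X] (d : ℕ) (g : Fin d → X),
      Submodule.span R (Set.range g) = ⊤ → (∀ x : X, π ^ a • x = 0) →
      ∃ f : Submodule R X → ℕ, StrictMono f ∧ ∀ P, f P ≤ a * d
  | 0, X, _, _, d, g, hg, hX => by
    haveI : Subsingleton X := ⟨fun x y => by
      have hx := hX x; have hy := hX y
      rw [pow_zero, one_smul] at hx hy
      rw [hx, hy]⟩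
    exact ⟨fun _ => 0, fun P Q hPQ => absurd (Subsingleton.elim P Q) hPQ.ne, fun _ => by simp⟩
  | (a + 1), X, _, _, d, g, hg, hX => by
    classical
    have hmax : (Ideal.span {π}).IsMaximal :=
      hπ.maximalIdeal_eq ▸ (inferInstance : (IsLocalRing.maximalIdeal R).IsMaximal)
    letI : Field (R ⧸ Ideal.span {π}) := Ideal.Quotient.field _
    have halg : Function.Surjective (algebraMap R (R ⧸ Ideal.span {π})) := by
      rw [Ideal.Quotient.algebraMap_eq]; exact Ideal.Quotient.mk_surjective
    set W : Submodule R X := π • (⊤ : Submodule R X) with hWdef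
    have htor : Module.IsTorsionBy R (X ⧸ W) π := Module.isTorsionBy_quotient_element_smul X π
    letI : Module (R ⧸ Ideal.span {π}) (X ⧸ W) :=
      ((Module.isTorsionBySet_span_singleton_iff π).mpr htor).module
    have mk_smul : ∀ (c : R) (x : X ⧸ W), (Ideal.Quotient.mk (Ideal.span {π}) c) • x = c • x :=
      fun c x => rfl
    haveI : IsScalarTower R (R ⧸ Ideal.span {π}) (X ⧸ W) :=
      IsScalarTower.of_algebraMap_smul fun r y => by
        rw [Ideal.Quotient.algebraMap_eq, mk_smul]
    haveI : Module.Finite R X := Module.Finite.of_surjective (Finsupp.linearCombination R g)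
      (by rw [← LinearMap.range_eq_top, Finsupp.range_linearCombination, hg])
    haveI : Module.Finite (R ⧸ Ideal.span {π}) (X ⧸ W) :=
      Module.Finite.of_restrictScalars_finite R _ _
    -- the `k'`-submodule corresponding to an `R`-submodule of `X ⧸ W`
    let σ : Submodule R (X ⧸ W) → Submodule (R ⧸ Ideal.span {π}) (X ⧸ W) := fun P =>
      { carrier := P
        add_mem' := fun h1 h2 => P.add_mem h1 h2
        zero_mem' := P.zero_mem
        smul_mem' := by
          rintro c x hx
          obtain ⟨c, rfl⟩ := Ideal.Quotient.mk_surjective c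
          rw [mk_smul]
          exact P.smul_mem c hx }
    have hσ : ∀ {P Q : Submodule R (X ⧸ W)}, P < Q → σ P < σ Q := by
      intro P Q hPQ
      refine lt_of_le_of_ne (fun x hx => hPQ.le hx) fun he => hPQ.ne (Submodule.ext fun x => ?_)
      exact ⟨fun hx => (he ▸ hx : x ∈ σ Q), fun hx => (he.symm ▸ hx : x ∈ σ P)⟩
    let f₂ : Submodule R (X ⧸ W) → ℕ := fun P => Module.finrank (R ⧸ Ideal.span {π}) (σ P)
    have hf₂mono : ∀ {P Q : Submodule R (X ⧸ W)}, P < Q → f₂ P < f₂ Q := fun hPQ =>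
      Submodule.finrank_lt_finrank_of_lt (hσ hPQ)
    have hf₂le : ∀ {P Q : Submodule R (X ⧸ W)}, P ≤ Q → f₂ P ≤ f₂ Q := by
      intro P Q hPQ
      rcases eq_or_lt_of_le hPQ with rfl | hlt
      · exact le_rfl
      · exact (hf₂mono hlt).le
    -- bound for `f₂`
    have hgen2 : Submodule.span R (Set.range (W.mkQ ∘ g)) = ⊤ := by
      rw [Set.range_comp, ← Submodule.map_span, hg, Submodule.map_top, Submodule.range_mkQ]
    have hspan' : Submodule.span (R ⧸ Ideal.span {π}) (Set.range (W.mkQ ∘ g)) = ⊤ := by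
      rw [← Submodule.restrictScalars_eq_top_iff (S := R),
        Submodule.restrictScalars_span R _ halg]
      exact hgen2
    have hYd : Module.finrank (R ⧸ Ideal.span {π}) (X ⧸ W) ≤ d := by
      have h1 := finrank_span_le_card (R := R ⧸ Ideal.span {π}) (Set.range (W.mkQ ∘ g))
      rw [hspan', finrank_top] at h1
      refine h1.trans ?_
      rw [Set.toFinset_range]
      exact (Finset.card_image_le).trans (by simp)
    have hf₂bd : ∀ P, f₂ P ≤ d := fun P => (Submodule.finrank_le (σ P)).trans hYd
    -- generators and torsion for `W`
    have hWmem : ∀ i, π • g i ∈ W := fun i => smul_mem_pointwise_smul _ _ _ trivial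
    let h : Fin d → ↥W := fun i => ⟨π • g i, hWmem i⟩
    have hh : Submodule.span R (Set.range h) = ⊤ := by
      apply Submodule.map_injective_of_injective (Submodule.injective_subtype W)
      rw [Submodule.map_span, Submodule.map_top, Submodule.range_subtype]
      have h1 : W.subtype '' Set.range h = Set.range fun i => π • g i := by
        rw [← Set.range_comp]; rfl
      rw [h1, Set.range_smul, ← Submodule.smul_span, hg]
    have hWt : ∀ x : ↥W, π ^ a • x = 0 := by
      rintro ⟨x, hx⟩
      have hx' : x ∈ π • ((⊤ : Submodule R X) : Set X) := hx
      obtain ⟨y, -, rfl⟩ := hx'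
      refine Subtype.ext ?_
      show π ^ a • π • y = 0
      rw [smul_smul, ← pow_succ]
      exact hX y
    obtain ⟨f₁, hf₁mono, hf₁bd⟩ := exists_rankFun hπ a (↥W) d h hh hWt
    -- assemble
    refine ⟨fun P => f₁ (Submodule.comap W.subtype P) + f₂ (Submodule.map W.mkQ P), ?_, ?_⟩
    · intro P Q hPQ
      have hq : Submodule.comap W.subtype P ≤ Submodule.comap W.subtype Q :=
        Submodule.comap_mono hPQ.le
      have hr : Submodule.map W.mkQ P ≤ Submodule.map W.mkQ Q := Submodule.map_mono hPQ.le
      by_cases hc : Q ⊓ W ≤ P ⊓ W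
      · have hsup := sup_lt_sup_of_lt_of_inf_le_inf hPQ hc
        have hrlt : Submodule.map W.mkQ P < Submodule.map W.mkQ Q := by
          refine lt_of_le_of_ne hr fun he => hsup.ne ?_
          have := congrArg (Submodule.comap W.mkQ) he
          rwa [Submodule.comap_map_eq, Submodule.comap_map_eq, Submodule.ker_mkQ] at this
        exact add_lt_add_of_le_of_lt (hf₁mono.monotone hq) (hf₂mono hrlt)
      · have hilt : P ⊓ W < Q ⊓ W :=
          lt_of_le_of_ne (inf_le_inf_right _ hPQ.le) fun he => hc (le_of_eq he.symm)
        have hqlt : Submodule.comap W.subtype P < Submodule.comap W.subtype Q := by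
          refine lt_of_le_of_ne hq fun he => hilt.ne ?_
          have := congrArg (Submodule.map W.subtype) he
          rwa [Submodule.map_comap_subtype, Submodule.map_comap_subtype, inf_comm W P,
            inf_comm W Q] at this
        exact add_lt_add_of_lt_of_le (hf₁mono hqlt) (hf₂le hr)
    · intro P
      have := add_le_add (hf₁bd (Submodule.comap W.subtype P)) (hf₂bd (Submodule.map W.mkQ P))
      calc f₁ (Submodule.comap W.subtype P) + f₂ (Submodule.map W.mkQ P) ≤ a * d + d := this
        _ = (a + 1) * d := by ring

/-- Let `M` be a finitely generated module over a discrete valuation ring `R` with residue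
field `k` and uniformizer `π`, and let `a` be a natural number.  Then the length of the
`π^a`-torsion submodule of `M` is at most `a` times the `k`-dimension of `M ⊗_R k`. -/
theorem length_torsionBy_le_mul_finrank
    {R : Type*} [CommRing R] [IsDomain R] [IsDiscreteValuationRing R]
    {π : R} (hπ : Irreducible π)
    (M : Type*) [AddCommGroup M] [Module R M] [Module.Finite R M] (a : ℕ) :
    moduleLength R (Submodule.torsionBy R M (π ^ a)) ≤
      ((a * Module.finrank (IsLocalRing.ResidueField R)
        ((IsLocalRing.ResidueField R) ⊗[R] M) : ℕ) : WithBot ℕ∞) := by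
  classical
  set k := IsLocalRing.ResidueField R with hk
  set d := Module.finrank k (k ⊗[R] M) with hd
  -- generators of `M` indexed by a basis of `k ⊗ M`
  let b : Module.Basis (Fin d) k (k ⊗[R] M) := Module.finBasis k (k ⊗[R] M)
  have hsurj : Function.Surjective ((TensorProduct.mk R k M) 1) :=
    TensorProduct.mk_surjective R M k Ideal.Quotient.mk_surjective
  choose g hg using fun i => hsurj (b i)
  have hspan : Submodule.span R (Set.range g) = ⊤ :=
    IsLocalRing.span_eq_top_of_tmul_eq_basis g b hg
  -- generators of the torsion submodule, via the PID structure theory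
  set T := Submodule.torsionBy R M (π ^ a) with hT
  let φ : (Fin d →₀ R) →ₗ[R] M := Finsupp.linearCombination R g
  have hφ : Function.Surjective φ := by
    rw [← LinearMap.range_eq_top, Finsupp.range_linearCombination, hspan]
  obtain ⟨n, bW⟩ :=
    Submodule.basisOfPid (Finsupp.basisSingleOne (R := R) (ι := Fin d)) (T.comap φ)
  have hnd : n ≤ d := by
    have h1 := Submodule.finrank_le (T.comap φ)
    rwa [Module.finrank_eq_card_basis bW, Module.finrank_finsupp_self, Fintype.card_fin,
      Fintype.card_fin] at h1
  let h : Fin n → ↥T := fun i => ⟨φ (bW i), (bW i).2⟩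
  have hh : Submodule.span R (Set.range h) = ⊤ := by
    apply Submodule.map_injective_of_injective (Submodule.injective_subtype T)
    rw [Submodule.map_span, Submodule.map_top, Submodule.range_subtype]
    have h1 : T.subtype '' Set.range h = ⇑φ '' Set.range fun i => ((bW i : Fin d →₀ R)) := by
      rw [← Set.range_comp, ← Set.range_comp]; rfl
    have h2 : Set.range (fun i => ((bW i : Fin d →₀ R))) =
        (T.comap φ).subtype '' Set.range bW := by
      rw [← Set.range_comp]; rfl
    rw [h1, ← Submodule.map_span, h2, ← Submodule.map_span, bW.span_eq, Submodule.map_top,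
      Submodule.range_subtype, Submodule.map_comap_eq_of_surjective hφ]
  have hTt : ∀ x : ↥T, π ^ a • x = 0 := by
    rintro ⟨x, hx⟩
    exact Subtype.ext ((Submodule.mem_torsionBy_iff _ x).mp hx)
  obtain ⟨f, hfmono, hfbd⟩ := exists_rankFun hπ a (↥T) n h hh hTt
  -- conclude via Krull dimension
  rw [moduleLength, Order.krullDim_eq_iSup_length]
  rw [← WithBot.coe_natCast, WithBot.coe_le_coe]
  refine iSup_le fun p => ?_
  rw [Nat.cast_le]
  have hlen : p.length ≤ a * n := by
    have hinj : Function.Injective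
        (fun i : Fin (p.length + 1) => (⟨f (p i), Nat.lt_succ_of_le (hfbd _)⟩ : Fin (a * n + 1))) :=
      fun i j hij => (hfmono.comp p.strictMono).injective (by simpa using congrArg Fin.val hij)
    have := Fintype.card_le_of_injective _ hinj
    simpa using this
  exact hlen.trans (Nat.mul_le_mul_left a hnd)
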